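/- Let d ≥ 1 and let p₁, …, p_{d+1} be points in ℝ², p_i = (x_i, y_i) with x₁ < ⋯ < x_{d+1}. For each i let p̃_i = (x_i, x_i², …, x_i^{d−1}, y_i) ∈ ℝ^d. Then the sign of Δ_d(p₁, …, p_{d+1}) equals the sign of det M(p̃₁, …, p̃_{d+1}), where M(q₁, …, q_{d+1}) is the (d+1)×(d+1) matrix whose j-th column is (1, q_j). -/

import Mathlib

open Finset




/-- The `m`-th divided difference `Δ_m(p₁, …, p_{m+1})` of a tuple of points in the plane. -/
noncomputable def divdiff : (m : ℕ) → (Fin (m + 1) → ℝ × ℝ) → ℝ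
  | 0, p => (p 0).2
  | m + 1, p =>
      (divdiff m (fun i => p i.succ) - divdiff m (fun i => p i.castSucc)) /
        ((p (Fin.last (m + 1))).1 - (p 0).1)


/-- The matrix `M(q₁, …, q_{d+1})` whose `j`-th column is `1` followed by the `d`
coordinates of `qⱼ ∈ ℝ^d`. -/
def otMat {d : ℕ} (q : Fin (d + 1) → Fin d → ℝ) : Matrix (Fin (d + 1)) (Fin (d + 1)) ℝ :=
  Matrix.of fun r c => Fin.cases (1 : ℝ) (fun r' => q c r') r




lemma image_succAbove_univ {n : ℕ} (i : Fin (n + 1)) :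
    (Finset.univ : Finset (Fin n)).image i.succAbove = Finset.univ.erase i := by
  ext k
  simp [Fin.exists_succAbove_eq_iff]

lemma prod_erase_eq_prod_succAbove {n : ℕ} (i : Fin (n + 1)) (f : Fin (n + 1) → ℝ) :
    ∏ j ∈ Finset.univ.erase i, f j = ∏ j : Fin n, f (i.succAbove j) := by
  rw [← image_succAbove_univ i, Finset.prod_image]
  intro a _ b _ h
  exact (Fin.succAbove_right_injective) h

lemma image_succ_erase {n : ℕ} (i : Fin (n + 1)) :
    (Finset.univ.erase i).image Fin.succ = (Finset.univ.erase i.succ).erase 0 := by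
  ext k
  constructor
  · intro hk
    simp only [Finset.mem_image, Finset.mem_erase, Finset.mem_univ, and_true] at hk ⊢
    obtain ⟨a, ha, rfl⟩ := hk
    exact ⟨Fin.succ_ne_zero a, fun h => ha (Fin.succ_injective _ h)⟩
  · intro hk
    simp only [Finset.mem_erase, Finset.mem_univ, and_true] at hk
    obtain ⟨h0, hi⟩ := hk
    obtain ⟨a, rfl⟩ := Fin.exists_succ_eq.mpr h0
    simp only [Finset.mem_image, Finset.mem_erase, Finset.mem_univ, and_true]
    exact ⟨a, fun h => hi (by rw [h]), rfl⟩

lemma image_castSucc_erase {n : ℕ} (i : Fin (n + 1)) :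
    (Finset.univ.erase i).image Fin.castSucc
      = (Finset.univ.erase i.castSucc).erase (Fin.last (n + 1)) := by
  ext k
  constructor
  · intro hk
    simp only [Finset.mem_image, Finset.mem_erase, Finset.mem_univ, and_true] at hk ⊢
    obtain ⟨a, ha, rfl⟩ := hk
    exact ⟨(Fin.castSucc_lt_last a).ne, fun h => ha (Fin.castSucc_injective _ h)⟩
  · intro hk
    simp only [Finset.mem_erase, Finset.mem_univ, and_true] at hk
    obtain ⟨h0, hi⟩ := hk
    obtain ⟨a, rfl⟩ := Fin.exists_castSucc_eq.mpr h0
    simp only [Finset.mem_image, Finset.mem_erase, Finset.mem_univ, and_true]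
    exact ⟨a, fun h => hi (by rw [h]), rfl⟩

lemma divdiff_eq_sum : ∀ (m : ℕ) (p : Fin (m + 1) → ℝ × ℝ),
    Function.Injective (fun i => (p i).1) →
    divdiff m p = ∑ i, (p i).2 * (∏ j ∈ Finset.univ.erase i, ((p i).1 - (p j).1))⁻¹ := by
  intro m
  induction m with
  | zero =>
      intro p _
      simp [divdiff]
  | succ m IH =>
      intro p hx
      set x : Fin (m + 2) → ℝ := fun i => (p i).1 with hxdef
      set y : Fin (m + 2) → ℝ := fun i => (p i).2 with hydef
      have hne : ∀ {i j : Fin (m + 2)}, i ≠ j → x i - x j ≠ 0 := by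
        intro i j hij
        exact sub_ne_zero.mpr (fun h => hij (hx h))
      have hprodne : ∀ (i : Fin (m + 2)) (s : Finset (Fin (m + 2))), i ∉ s →
          (∏ j ∈ s, (x i - x j)) ≠ 0 := by
        intro i s his
        refine Finset.prod_ne_zero_iff.mpr ?_
        intro j hj
        exact hne (fun h => his (h ▸ hj))
      set F : Fin (m + 2) → ℝ := fun i =>
        y i * (∏ j ∈ (Finset.univ.erase i).erase 0, (x i - x j))⁻¹ with hF
      set G : Fin (m + 2) → ℝ := fun i =>
        y i * (∏ j ∈ (Finset.univ.erase i).erase (Fin.last (m + 1)), (x i - x j))⁻¹ with hG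
      have hA : divdiff m (fun i => p i.succ) = ∑ i : Fin (m + 1), F i.succ := by
        rw [IH _ (hx.comp (Fin.succ_injective _))]
        refine Finset.sum_congr rfl fun i _ => ?_
        simp only [hF]
        rw [← image_succ_erase i,
          Finset.prod_image (fun a _ b _ h => Fin.succ_injective _ h)]
      have hB : divdiff m (fun i => p i.castSucc) = ∑ i : Fin (m + 1), G i.castSucc := by
        rw [IH _ (hx.comp (Fin.castSucc_injective _))]
        refine Finset.sum_congr rfl fun i _ => ?_
        simp only [hG]
        rw [← image_castSucc_erase i,
          Finset.prod_image (fun a _ b _ h => Fin.castSucc_injective _ h)]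
      have hA' : ∑ i : Fin (m + 1), F i.succ = (∑ i, F i) - F 0 := by
        conv_rhs => rw [Fin.sum_univ_succ]
        ring
      have hB' : ∑ i : Fin (m + 1), G i.castSucc = (∑ i, G i) - G (Fin.last (m + 1)) := by
        conv_rhs => rw [Fin.sum_univ_castSucc]
        ring
      have hl0 : (0 : Fin (m + 2)) ≠ Fin.last (m + 1) := (Fin.last_pos).ne
      have hc : x (Fin.last (m + 1)) - x 0 ≠ 0 := hne hl0.symm
      show (divdiff m (fun i => p i.succ) - divdiff m (fun i => p i.castSucc)) /
          (x (Fin.last (m + 1)) - x 0) = _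
      rw [hA, hB, hA', hB', div_eq_iff hc]
      have key : ∀ i : Fin (m + 2),
          (F i - (if i = 0 then F i else 0)) - (G i - (if i = Fin.last (m + 1) then G i else 0))
            = y i * (∏ j ∈ Finset.univ.erase i, (x i - x j))⁻¹ *
              (x (Fin.last (m + 1)) - x 0) := by
        intro i
        by_cases h0 : i = 0
        · subst h0
          rw [if_pos rfl, if_neg hl0, sub_self, zero_sub, sub_zero]
          have hmem : Fin.last (m + 1) ∈ Finset.univ.erase (0 : Fin (m + 2)) :=
            Finset.mem_erase.mpr ⟨hl0.symm, Finset.mem_univ _⟩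
          have hsplit : ∏ j ∈ Finset.univ.erase (0 : Fin (m + 2)), (x 0 - x j)
              = (x 0 - x (Fin.last (m + 1))) *
                ∏ j ∈ (Finset.univ.erase (0 : Fin (m + 2))).erase (Fin.last (m + 1)),
                  (x 0 - x j) :=
            (Finset.mul_prod_erase _ _ hmem).symm
          have hQ : (∏ j ∈ (Finset.univ.erase (0 : Fin (m + 2))).erase (Fin.last (m + 1)),
              (x 0 - x j)) ≠ 0 := hprodne _ _ (by simp)
          have h0l : x 0 - x (Fin.last (m + 1)) ≠ 0 := hne hl0
          simp only [hG, hsplit]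
          field_simp
          ring
        · by_cases hl : i = Fin.last (m + 1)
          · subst hl
            rw [if_neg h0, if_pos rfl, sub_self, sub_zero, sub_zero]
            have hmem : (0 : Fin (m + 2)) ∈ Finset.univ.erase (Fin.last (m + 1)) :=
              Finset.mem_erase.mpr ⟨hl0, Finset.mem_univ _⟩
            have hsplit : ∏ j ∈ Finset.univ.erase (Fin.last (m + 1)), (x (Fin.last (m+1)) - x j)
                = (x (Fin.last (m+1)) - x 0) *
                  ∏ j ∈ (Finset.univ.erase (Fin.last (m+1))).erase 0,
                    (x (Fin.last (m+1)) - x j) :=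
              (Finset.mul_prod_erase _ _ hmem).symm
            have hQ : (∏ j ∈ (Finset.univ.erase (Fin.last (m+1))).erase 0,
                (x (Fin.last (m+1)) - x j)) ≠ 0 := hprodne _ _ (by simp)
            have hrc : (Finset.univ.erase (Fin.last (m+1))).erase (0 : Fin (m+2)) =
                (Finset.univ.erase (0 : Fin (m+2))).erase (Fin.last (m+1)) :=
              Finset.erase_right_comm
            simp only [hF, hsplit, ← hrc]
            field_simp
          · rw [if_neg h0, if_neg hl]
            have hmem1 : Fin.last (m + 1) ∈ (Finset.univ.erase i).erase (0 : Fin (m + 2)) :=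
              Finset.mem_erase.mpr ⟨hl0.symm,
                Finset.mem_erase.mpr ⟨fun h => hl h.symm, Finset.mem_univ _⟩⟩
            have hmem2 : (0 : Fin (m + 2)) ∈ (Finset.univ.erase i).erase (Fin.last (m + 1)) :=
              Finset.mem_erase.mpr ⟨hl0,
                Finset.mem_erase.mpr ⟨fun h => h0 h.symm, Finset.mem_univ _⟩⟩
            have hmem3 : (0 : Fin (m + 2)) ∈ Finset.univ.erase i :=
              Finset.mem_erase.mpr ⟨fun h => h0 h.symm, Finset.mem_univ _⟩
            set Q : ℝ := ∏ j ∈ ((Finset.univ.erase i).erase (0 : Fin (m+2))).erase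
                (Fin.last (m+1)), (x i - x j) with hQdef
            have hQne : Q ≠ 0 := hprodne _ _ (by simp)
            have hrcQ : ((Finset.univ.erase i).erase (0 : Fin (m+2))).erase (Fin.last (m+1))
                = ((Finset.univ.erase i).erase (Fin.last (m+1))).erase (0 : Fin (m+2)) :=
              Finset.erase_right_comm
            have e1 : ∏ j ∈ (Finset.univ.erase i).erase (0 : Fin (m+2)), (x i - x j)
                = (x i - x (Fin.last (m+1))) * Q := by
              rw [hQdef]
              exact (Finset.mul_prod_erase _ _ hmem1).symm
            have e2 : ∏ j ∈ (Finset.univ.erase i).erase (Fin.last (m+1)), (x i - x j)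
                = (x i - x 0) * Q := by
              rw [hQdef, hrcQ]
              exact (Finset.mul_prod_erase _ _ hmem2).symm
            have e3 : ∏ j ∈ Finset.univ.erase i, (x i - x j)
                = (x i - x 0) * ((x i - x (Fin.last (m+1))) * Q) := by
              rw [← e1]
              exact (Finset.mul_prod_erase _ _ hmem3).symm
            have hi0 : x i - x 0 ≠ 0 := hne h0
            have hil : x i - x (Fin.last (m+1)) ≠ 0 := hne hl
            simp only [hF, hG, e1, e2, e3]
            field_simp
            ring
      have h1 : ∑ i, (if i = 0 then F i else 0) = F 0 := by simp
      have h2 : ∑ i, (if i = Fin.last (m + 1) then G i else 0) = G (Fin.last (m + 1)) := by simp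
      calc (∑ i, F i) - F 0 - ((∑ i, G i) - G (Fin.last (m + 1)))
          = ∑ i, ((F i - (if i = 0 then F i else 0)) -
              (G i - (if i = Fin.last (m + 1) then G i else 0))) := by
            rw [← h1, ← h2, ← Finset.sum_sub_distrib, ← Finset.sum_sub_distrib,
              ← Finset.sum_sub_distrib]
        _ = ∑ i, y i * (∏ j ∈ Finset.univ.erase i, (x i - x j))⁻¹ *
              (x (Fin.last (m + 1)) - x 0) := Finset.sum_congr rfl fun i _ => key i
        _ = (∑ i, y i * (∏ j ∈ Finset.univ.erase i, (x i - x j))⁻¹) *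
              (x (Fin.last (m + 1)) - x 0) := by rw [← Finset.sum_mul]



lemma double_prod_eq_pairs {m : ℕ} (g : Fin m → Fin m → ℝ) :
    ∏ a, ∏ b ∈ Finset.Ioi a, g a b
      = ∏ q ∈ Finset.univ.filter (fun q : Fin m × Fin m => q.1 < q.2), g q.1 q.2 := by
  rw [Finset.prod_filter, ← Finset.univ_product_univ, Finset.prod_product]
  refine Finset.prod_congr rfl fun a _ => ?_
  have h : Finset.Ioi a = Finset.univ.filter (fun b => a < b) := by ext b; simp
  rw [h, Finset.prod_filter]

lemma vand_split {n : ℕ} (x : Fin (n + 1) → ℝ) (j : Fin (n + 1)) :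
    (∏ a, ∏ b ∈ Finset.Ioi a, (x b - x a)) =
      (∏ a : Fin n, ∏ b ∈ Finset.Ioi a, (x (j.succAbove b) - x (j.succAbove a))) *
      ((∏ k ∈ Finset.Iio j, (x j - x k)) * ∏ k ∈ Finset.Ioi j, (x k - x j)) := by
  classical
  set S : Finset (Fin (n+1) × Fin (n+1)) :=
    Finset.univ.filter (fun q : Fin (n+1) × Fin (n+1) => q.1 < q.2) with hS
  rw [double_prod_eq_pairs, ← hS,
    ← Finset.prod_filter_not_mul_prod_filter S (fun q => q.1 = j ∨ q.2 = j)]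
  congr 1
  · -- pairs avoiding j
    rw [double_prod_eq_pairs]
    refine (Finset.prod_bij (fun q _ => (j.succAbove q.1, j.succAbove q.2)) ?_ ?_ ?_ ?_).symm
    · intro q hq
      simp only [Finset.mem_filter, Finset.mem_univ, true_and] at hq ⊢
      refine ⟨?_, ?_⟩
      · rw [hS]
        simp only [Finset.mem_filter, Finset.mem_univ, true_and]
        exact Fin.succAbove_lt_succAbove_iff.mpr hq
      · push_neg
        exact ⟨Fin.succAbove_ne j q.1, Fin.succAbove_ne j q.2⟩
    · intro q₁ h₁ q₂ h₂ h
      simp only [Prod.mk.injEq] at h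
      exact Prod.ext (Fin.succAbove_right_injective h.1) (Fin.succAbove_right_injective h.2)
    · intro q hq
      simp only [Finset.mem_filter, Finset.mem_univ, true_and, hS] at hq
      obtain ⟨hlt, hnj⟩ := hq
      push_neg at hnj
      obtain ⟨a, ha⟩ := Fin.exists_succAbove_eq hnj.1
      obtain ⟨b, hb⟩ := Fin.exists_succAbove_eq hnj.2
      refine ⟨(a, b), ?_, ?_⟩
      · simp only [Finset.mem_filter, Finset.mem_univ, true_and]
        rw [← Fin.succAbove_lt_succAbove_iff (p := j), ha, hb]
        exact hlt
      · simp [ha, hb]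
    · intro q hq
      rfl
  · -- pairs containing j
    have hset : S.filter (fun q => q.1 = j ∨ q.2 = j)
        = ((Finset.Iio j).image fun k => (k, j)) ∪ ((Finset.Ioi j).image fun k => (j, k)) := by
      ext ⟨a, b⟩
      simp only [hS, Finset.mem_filter, Finset.mem_univ, true_and, Finset.mem_union,
        Finset.mem_image, Finset.mem_Iio, Finset.mem_Ioi, Prod.mk.injEq, Finset.filter_filter]
      constructor
      · rintro ⟨hab, h | h⟩
        · subst h
          exact Or.inr ⟨b, hab, rfl, rfl⟩
        · subst h
          exact Or.inl ⟨a, hab, rfl, rfl⟩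
      · rintro (⟨k, hk, rfl, rfl⟩ | ⟨k, hk, rfl, rfl⟩)
        · exact ⟨hk, Or.inr rfl⟩
        · exact ⟨hk, Or.inl rfl⟩
    have hdisj : Disjoint ((Finset.Iio j).image fun k => (k, j))
        ((Finset.Ioi j).image fun k => (j, k)) := by
      rw [Finset.disjoint_left]
      rintro ⟨a, b⟩ h1 h2
      simp only [Finset.mem_image, Finset.mem_Iio, Finset.mem_Ioi, Prod.mk.injEq] at h1 h2
      obtain ⟨k, hk, rfl, rfl⟩ := h1
      obtain ⟨k', hk', h, _⟩ := h2
      exact absurd h.symm (ne_of_lt hk)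
    rw [hset, Finset.prod_union hdisj,
      Finset.prod_image (fun a _ b _ h => (Prod.mk.injEq _ _ _ _ ▸ h).1),
      Finset.prod_image (fun a _ b _ h => (Prod.mk.injEq _ _ _ _ ▸ h).2)]

lemma prod_neg' {α : Type*} (s : Finset α) (f : α → ℝ) :
    ∏ i ∈ s, (-f i) = (-1) ^ s.card * ∏ i ∈ s, f i := by
  calc ∏ i ∈ s, (-f i) = ∏ i ∈ s, ((-1) * f i) := by simp [neg_one_mul]
    _ = (∏ _i ∈ s, (-1 : ℝ)) * ∏ i ∈ s, f i := Finset.prod_mul_distrib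
    _ = (-1) ^ s.card * ∏ i ∈ s, f i := by rw [Finset.prod_const]

lemma real_sign_pos_mul {c t : ℝ} (hc : 0 < c) : Real.sign (c * t) = Real.sign t := by
  rcases lt_trichotomy t 0 with h | rfl | h
  · rw [Real.sign_of_neg h, Real.sign_of_neg (mul_neg_of_pos_of_neg hc h)]
  · simp [Real.sign_zero]
  · rw [Real.sign_of_pos h, Real.sign_of_pos (mul_pos hc h)]


/-- **Lemma 4.1**: for points `p₁, …, p_{d+1}` in the plane with `x₁ < ⋯ < x_{d+1}` and the
lifted points `p̃ᵢ = (xᵢ, xᵢ², …, xᵢ^{d-1}, yᵢ) ∈ ℝ^d`, the sign of `Δ_d(p₁, …, p_{d+1})`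
equals the sign of `det M(p̃₁, …, p̃_{d+1})`. -/

theorem stmt14 (d : ℕ) (hd : 1 ≤ d) (p : Fin (d + 1) → ℝ × ℝ)
    (hx : StrictMono fun i => (p i).1) :
    Real.sign (divdiff d p) =
      Real.sign (Matrix.det (otMat (fun i => fun j : Fin d =>
        if (j : ℕ) + 1 = d then (p i).2 else (p i).1 ^ ((j : ℕ) + 1)))) := by
  obtain ⟨e, rfl⟩ : ∃ e, d = e + 1 := ⟨d - 1, (Nat.succ_pred_eq_of_pos hd).symm⟩
  set x : Fin (e + 2) → ℝ := fun i => (p i).1 with hxdef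
  set y : Fin (e + 2) → ℝ := fun i => (p i).2 with hydef
  set q : Fin (e + 2) → Fin (e + 1) → ℝ := fun i => fun j : Fin (e + 1) =>
    if (j : ℕ) + 1 = e + 1 then (p i).2 else (p i).1 ^ ((j : ℕ) + 1) with hq
  have hxinj : Function.Injective x := hx.injective
  have hlast : ∀ c, otMat q (Fin.last (e + 1)) c = y c := by
    intro c
    show (Fin.cases (1 : ℝ) (fun r' => q c r') (Fin.last (e + 1)) : ℝ) = y c
    rw [← Fin.succ_last, Fin.cases_succ]
    simp [hq, hydef]
  have hsub : ∀ c : Fin (e + 2),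
      (otMat q).submatrix (Fin.last (e + 1)).succAbove c.succAbove
        = (Matrix.vandermonde (fun k : Fin (e + 1) => x (c.succAbove k))).transpose := by
    intro c
    ext r s
    rw [Matrix.submatrix_apply, Fin.succAbove_last]
    induction r using Fin.cases with
    | zero =>
        show (Fin.cases (1 : ℝ) (fun r' => q (c.succAbove s) r') (Fin.castSucc 0) : ℝ) = _
        rw [Fin.castSucc_zero, Fin.cases_zero]
        simp [Matrix.vandermonde]
    | succ r' =>
        show (Fin.cases (1 : ℝ) (fun r'' => q (c.succAbove s) r'')
          (Fin.castSucc r'.succ) : ℝ) = _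
        rw [← Fin.succ_castSucc, Fin.cases_succ]
        have hne' : (r' : ℕ) ≠ e := by
          have := r'.is_lt
          omega
        simp [hq, Matrix.vandermonde, hxdef, hne']
  have hdet : Matrix.det (otMat q)
      = ∑ c : Fin (e + 2), (-1) ^ ((e + 1) + (c : ℕ)) * y c *
          ∏ a : Fin (e + 1), ∏ b ∈ Finset.Ioi a, (x (c.succAbove b) - x (c.succAbove a)) := by
    rw [Matrix.det_succ_row (otMat q) (Fin.last (e + 1))]
    refine Finset.sum_congr rfl fun c _ => ?_
    rw [hlast c, hsub c, Matrix.det_transpose, Matrix.det_vandermonde, Fin.val_last]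
  set V : ℝ := ∏ a : Fin (e + 2), ∏ b ∈ Finset.Ioi a, (x b - x a) with hV
  have hVpos : 0 < V := by
    rw [hV]
    refine Finset.prod_pos fun a _ => Finset.prod_pos fun b hb => ?_
    exact sub_pos.mpr (hx (Finset.mem_Ioi.mp hb))
  have hterm : ∀ c : Fin (e + 2),
      (-1) ^ ((e + 1) + (c : ℕ)) * y c *
          (∏ a : Fin (e + 1), ∏ b ∈ Finset.Ioi a, (x (c.succAbove b) - x (c.succAbove a)))
        = V * (y c * (∏ j ∈ Finset.univ.erase c, (x c - x j))⁻¹) := by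
    intro c
    have hEsplit : (Finset.univ.erase c : Finset (Fin (e + 2)))
        = Finset.Iio c ∪ Finset.Ioi c := by
      ext k
      simp only [Finset.mem_erase, Finset.mem_univ, and_true, Finset.mem_union, Finset.mem_Iio,
        Finset.mem_Ioi]
      exact ne_iff_lt_or_gt
    have hdisj : Disjoint (Finset.Iio c) (Finset.Ioi c) := by
      rw [Finset.disjoint_left]
      intro k h1 h2
      exact absurd (Finset.mem_Ioi.mp h2) (not_lt.mpr (Finset.mem_Iio.mp h1).le)
    have hcard : (Finset.Ioi c).card = e + 1 - (c : ℕ) := by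
      rw [Fin.card_Ioi]
      omega
    have hE : ∏ j ∈ Finset.univ.erase c, (x c - x j)
        = (-1) ^ (e + 1 - (c : ℕ)) *
          ((∏ k ∈ Finset.Iio c, (x c - x k)) * ∏ k ∈ Finset.Ioi c, (x k - x c)) := by
      rw [hEsplit, Finset.prod_union hdisj]
      have h2 : ∏ k ∈ Finset.Ioi c, (x c - x k) = ∏ k ∈ Finset.Ioi c, -(x k - x c) := by
        refine Finset.prod_congr rfl fun k _ => ?_
        ring
      rw [h2, prod_neg', hcard]
      ring
    have hPP : (∏ k ∈ Finset.Iio c, (x c - x k)) * ∏ k ∈ Finset.Ioi c, (x k - x c)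
        = (-1) ^ (e + 1 - (c : ℕ)) * ∏ j ∈ Finset.univ.erase c, (x c - x j) := by
      rw [hE, ← mul_assoc, ← pow_add]
      have h3 : (-1 : ℝ) ^ ((e + 1 - (c : ℕ)) + (e + 1 - (c : ℕ))) = 1 := by
        rw [← two_mul, pow_mul, neg_one_sq, one_pow]
      rw [h3, one_mul]
    have hparity : ((-1 : ℝ)) ^ ((e + 1) + (c : ℕ)) = (-1) ^ (e + 1 - (c : ℕ)) := by
      have h1 : (e + 1) + (c : ℕ) = (e + 1 - (c : ℕ)) + 2 * (c : ℕ) := by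
        have := c.is_lt
        omega
      rw [h1, pow_add, pow_mul, neg_one_sq, one_pow, mul_one]
    have hEne : (∏ j ∈ Finset.univ.erase c, (x c - x j)) ≠ 0 := by
      refine Finset.prod_ne_zero_iff.mpr fun j hj => ?_
      exact sub_ne_zero.mpr fun h => (Finset.mem_erase.mp hj).1.symm (hxinj h)
    rw [hV, vand_split x c, hPP, hparity]
    field_simp
  have hfinal : Matrix.det (otMat q) = V * divdiff (e + 1) p := by
    rw [hdet, divdiff_eq_sum (e + 1) p hxinj, Finset.mul_sum]
    exact Finset.sum_congr rfl fun c _ => hterm c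
  rw [hfinal, real_sign_pos_mul hVpos]
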